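/- Let ψ : ℝ → ℝ be measurable with ∫_{−∞}^{∞} |ψ(x)·x| dx < ∞ and ∫_{−1}^{1} |ψ(x)| dx < ∞, and let ψ̌(t) = ∫_{−∞}^{t} e^{−(t−u)} ψ(u) du. Then ∫_{−∞}^{∞} |ψ̌(x)·x| dx < ∞. -/

import Mathlib

open MeasureTheory

theorem stmt_4 (ψ : ℝ → ℝ) (hmeas : Measurable ψ)
    (h1 : Integrable (fun x => ψ x * x))
    (h2 : IntegrableOn ψ (Set.Icc (-1 : ℝ) 1)) :
    Integrable (fun x => (∫ u in Set.Iic x, Real.exp (-(x - u)) * ψ u) * x) := by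
  -- ψ is integrable on all of ℝ
  have hcomp : IntegrableOn ψ (Set.Icc (-1 : ℝ) 1)ᶜ := by
    refine Integrable.mono (h1.restrict) hmeas.aestronglyMeasurable.restrict ?_
    filter_upwards [ae_restrict_mem measurableSet_Icc.compl] with x hx
    have h1x : 1 ≤ |x| := by
      simp only [Set.mem_compl_iff, Set.mem_Icc, ← abs_le, not_le] at hx
      exact hx.le
    rw [Real.norm_eq_abs, Real.norm_eq_abs, abs_mul]
    nlinarith [abs_nonneg (ψ x)]
  have hψ : Integrable ψ := by
    rw [← integrableOn_univ, ← Set.union_compl_self (Set.Icc (-1 : ℝ) 1)]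
    exact h2.union hcomp
  -- the kernel g and its weighted version g2
  set g : ℝ → ℝ := (Set.Ici (0 : ℝ)).indicator fun s => Real.exp (-s) with hgdef
  set g2 : ℝ → ℝ := fun s => s * g s with hg2def
  have hg : Integrable g := by
    rw [integrable_indicator_iff measurableSet_Ici, integrableOn_Ici_iff_integrableOn_Ioi]
    have := exp_neg_integrableOn_Ioi 0 (one_pos)
    refine this.congr_fun (fun x _ => by norm_num) measurableSet_Ioi
  have hg2 : Integrable g2 := by
    have : g2 = (Set.Ici (0 : ℝ)).indicator fun s => s * Real.exp (-s) := by
      funext s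
      by_cases hs : s ∈ Set.Ici (0 : ℝ) <;>
        simp [hg2def, hgdef, Set.indicator_of_mem, Set.indicator_of_notMem, hs]
    rw [this, integrable_indicator_iff measurableSet_Ici,
      integrableOn_Ici_iff_integrableOn_Ioi]
    have := Real.GammaIntegral_convergent (by norm_num : (0:ℝ) < 2)
    refine this.congr_fun (fun x hx => ?_) measurableSet_Ioi
    dsimp only
    rw [show (2:ℝ) - 1 = 1 by norm_num, Real.rpow_one, mul_comm]
  -- the two convolutions
  set L := ContinuousLinearMap.mul ℝ ℝ
  have hc1 : Integrable (convolution (fun u => ψ u * u) g L volume) :=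
    h1.integrable_convolution L hg
  have hc2 : Integrable (convolution ψ g2 L volume) :=
    hψ.integrable_convolution L hg2
  refine (hc1.add hc2).congr ?_
  -- a.e. equality
  filter_upwards [h1.ae_convolution_exists L hg, hψ.ae_convolution_exists L hg2]
    with x he1 he2
  have he1' : Integrable fun u => ψ u * u * g (x - u) := by
    have := he1.integrable
    simpa [L, ContinuousLinearMap.mul_apply'] using this
  have he2' : Integrable fun u => ψ u * g2 (x - u) := by
    have := he2.integrable
    simpa [L, ContinuousLinearMap.mul_apply'] using this
  have key : ∫ u in Set.Iic x, Real.exp (-(x - u)) * ψ u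
      = ∫ u, g (x - u) * ψ u := by
    rw [← integral_indicator measurableSet_Iic]
    congr 1
    funext u
    by_cases hu : u ≤ x
    · rw [Set.indicator_of_mem (Set.mem_Iic.mpr hu), hgdef,
        Set.indicator_of_mem (Set.mem_Ici.mpr (by linarith : (0:ℝ) ≤ x - u))]
    · rw [Set.indicator_of_notMem (by simpa using hu), hgdef,
        Set.indicator_of_notMem (by simp; linarith [lt_of_not_ge hu])]
      simp
  calc convolution (fun u => ψ u * u) g L volume x + convolution ψ g2 L volume x
      = (∫ u, ψ u * u * g (x - u)) + ∫ u, ψ u * g2 (x - u) := by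
        simp only [convolution, L, ContinuousLinearMap.mul_apply']
    _ = ∫ u, (ψ u * u * g (x - u) + ψ u * g2 (x - u)) := (integral_add he1' he2').symm
    _ = ∫ u, g (x - u) * ψ u * x := by
        congr 1; funext u; simp only [hg2def]; ring
    _ = (∫ u, g (x - u) * ψ u) * x := integral_mul_const _ _
    _ = (∫ u in Set.Iic x, Real.exp (-(x - u)) * ψ u) * x := by rw [key]
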